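/- Let p(x,y) be a joint density with marginal p(y), q(x) a density mutually absolutely continuous with p(·|y), and for each x let L(x) be a random variable with E[L(x)] ≤ log q(x), defining B_L(x) = log q(x) − E[L(x)] ≥ 0. Then U := E_{x~p(·|y)}[log p(x,y) − L(x)] satisfies U − log p(y) = KL(p(·|y) ‖ q) + E_{x~p(·|y)}[B_L(x)]; in particular U ≥ log p(y). -/

import Mathlib

open MeasureTheory

/-- Inductive step of RAVI Theorem 4 for upper bounds: replacing `log q(x)` by a
stochastic lower bound `L(x)` gives a surrogate EUBO `U` whose gap above
`log p(y)` is `KL(p(·|y) ‖ q)` plus the expected meta-inference bias. -/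
theorem ravi_surrogate_eubo_bias
    {X Y Ω : Type*} [MeasurableSpace X] [MeasurableSpace Y] [MeasurableSpace Ω]
    (μ : Measure X) (P : Measure Ω) [IsProbabilityMeasure P]
    (p : X → Y → ℝ) (y : Y) (py : ℝ) (q : X → ℝ)
    (L : X → Ω → ℝ) (BL : X → ℝ) (U : ℝ)
    (hp_nonneg : ∀ x, 0 ≤ p x y)
    (hpy : py = ∫ x, p x y ∂μ) (hpy_pos : 0 < py)
    (hq_nonneg : ∀ x, 0 ≤ q x) (hq_norm : ∫ x, q x ∂μ = 1)
    (habs : ∀ x, q x = 0 ↔ p x y = 0)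
    (hL_int : ∀ x, Integrable (L x) P)
    (hBL : ∀ x, BL x = Real.log (q x) - ∫ ω, L x ω ∂P)
    (hBL_nonneg : ∀ x, 0 ≤ BL x)
    (hU : U = ∫ x, (p x y / py) * (Real.log (p x y) - ∫ ω, L x ω ∂P) ∂μ)
    (hint1 : Integrable
      (fun x => (p x y / py) * (Real.log (p x y) - ∫ ω, L x ω ∂P)) μ)
    (hint2 : Integrable
      (fun x => (p x y / py) * Real.log ((p x y / py) / q x)) μ)
    (hint3 : Integrable (fun x => (p x y / py) * BL x) μ) :
    U - Real.log py
        = (∫ x, (p x y / py) * Real.log ((p x y / py) / q x) ∂μ)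
          + ∫ x, (p x y / py) * BL x ∂μ
      ∧ Real.log py ≤ U := by
  have hp_int : Integrable (fun x => p x y) μ := by
    by_contra h
    rw [integral_undef h] at hpy
    linarith
  have hq_int : Integrable q μ := by
    by_contra h
    rw [integral_undef h] at hq_norm
    norm_num at hq_norm
  have hr_int : Integrable (fun x => p x y / py) μ := hp_int.div_const py
  have hr_one : ∫ x, p x y / py ∂μ = 1 := by
    rw [integral_div, ← hpy, div_self hpy_pos.ne']
  -- main identity
  have key : U - Real.log py
      = (∫ x, (p x y / py) * Real.log ((p x y / py) / q x) ∂μ)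
        + ∫ x, (p x y / py) * BL x ∂μ := by
    have hlog : Real.log py = ∫ x, (p x y / py) * Real.log py ∂μ := by
      rw [integral_mul_const, hr_one, one_mul]
    rw [hU, hlog, ← integral_sub hint1 (hr_int.mul_const _),
        ← integral_add hint2 hint3]
    apply integral_congr_ae
    filter_upwards with x
    rcases eq_or_lt_of_le (hp_nonneg x) with h0 | hpos
    · simp [← h0, hBL x, (habs x).mpr h0.symm]
    · have hq_pos : 0 < q x := by
        rcases eq_or_lt_of_le (hq_nonneg x) with h | h
        · exact absurd ((habs x).mp h.symm) hpos.ne'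
        · exact h
      have hr_pos : 0 < p x y / py := div_pos hpos hpy_pos
      rw [Real.log_div hr_pos.ne' hq_pos.ne', Real.log_div hpos.ne' hpy_pos.ne',
          hBL x]
      ring
  refine ⟨key, ?_⟩
  -- nonnegativity of the two gap terms
  have hB : 0 ≤ ∫ x, (p x y / py) * BL x ∂μ := by
    apply integral_nonneg
    intro x
    exact mul_nonneg (div_nonneg (hp_nonneg x) hpy_pos.le) (hBL_nonneg x)
  have hKL : 0 ≤ ∫ x, (p x y / py) * Real.log ((p x y / py) / q x) ∂μ := by
    have hsub : ∫ x, (p x y / py - q x) ∂μ = 0 := by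
      rw [integral_sub hr_int hq_int, hr_one, hq_norm, sub_self]
    have hmono : ∫ x, (p x y / py - q x) ∂μ
        ≤ ∫ x, (p x y / py) * Real.log ((p x y / py) / q x) ∂μ := by
      apply integral_mono (hr_int.sub hq_int) hint2
      intro x
      rcases eq_or_lt_of_le (hp_nonneg x) with h0 | hpos
      · simp [← h0, (habs x).mpr h0.symm]
      · have hq_pos : 0 < q x := by
          rcases eq_or_lt_of_le (hq_nonneg x) with h | h
          · exact absurd ((habs x).mp h.symm) hpos.ne'
          · exact h
        have hr_pos : 0 < p x y / py := div_pos hpos hpy_pos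
        have h1 : Real.log (q x / (p x y / py)) ≤ q x / (p x y / py) - 1 :=
          Real.log_le_sub_one_of_pos (div_pos hq_pos hr_pos)
        have h2 : Real.log ((p x y / py) / q x)
            = -Real.log (q x / (p x y / py)) := by
          rw [Real.log_div hr_pos.ne' hq_pos.ne',
              Real.log_div hq_pos.ne' hr_pos.ne']
          ring
        calc p x y / py - q x
            = (p x y / py) * (1 - q x / (p x y / py)) := by
              field_simp
          _ ≤ (p x y / py) * Real.log ((p x y / py) / q x) := by
              apply mul_le_mul_of_nonneg_left _ hr_pos.le
              rw [h2]
              linarith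
    linarith [hsub ▸ hmono]
  linarith [key]
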